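/- arXiv:1602.03728 — 4 statements merged into one kernel-verified Lean document; each statement's English description precedes it below -/
import Mathlib

section
/- For any first-order differential operator X (vector field) and any differential operators Y, Z, the associator of the white multiplication satisfies (X, Y, Z)^∘ = (X • Y) ∘ Z, where (X, Y, Z)^∘ = X ∘ (Y ∘ Z) − (X ∘ Y) ∘ Z. -/
open Finsupp

/-- The space of linear differential operators in `n` variables (with polynomial
coefficients over `ℂ`): a formal finite sum `Σ_α u_α ∂^α`. -/
abbrev Diff (n : ℕ) := (Fin n →₀ ℕ) →₀ MvPolynomial (Fin n) ℂ

/-- The operator `∂^α = ∂₁^{α₁} ⋯ ∂ₙ^{αₙ}` acting on coefficient functions. -/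
noncomputable def Dop {n : ℕ} (α : Fin n →₀ ℕ) :
    Module.End ℂ (MvPolynomial (Fin n) ℂ) :=
  (List.ofFn fun i : Fin n => ((MvPolynomial.pderiv i).toLinearMap) ^ (α i)).prod

/-- White multiplication: `(u ∂^α) ∘ (v ∂^β) = u ∂^α(v) ∂^β`, extended bilinearly. -/
noncomputable def white {n : ℕ} (X Y : Diff n) : Diff n :=
  X.sum fun α u => Y.sum fun β v => Finsupp.single β (u * Dop α v)

/-- Black multiplication: `(u ∂^α) • (v ∂^β) = u v ∂^{α+β}`, extended bilinearly. -/
noncomputable def black {n : ℕ} (X Y : Diff n) : Diff n :=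
  X.sum fun α u => Y.sum fun β v => Finsupp.single (α + β) (u * v)

/-- Composition of differential operators:
`(u ∂^α) ⋄ (v ∂^β) = Σ_{γ ≤ α} binom(α,γ) u ∂^γ(v) ∂^{α+β-γ}`, extended bilinearly. -/
noncomputable def diam {n : ℕ} (X Y : Diff n) : Diff n :=
  X.sum fun α u => Y.sum fun β v =>
    ∑ γ ∈ Finset.Iic α,
      Finsupp.single (α + β - γ) (((∏ i, ((α i).choose (γ i)) : ℕ) : ℂ) • (u * Dop γ v))

/-- A differential operator is of first order (a vector field) if it has the
form `Σ_i u_i ∂_i`, i.e. every multi-index in its support has total degree 1. -/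
def IsVect {n : ℕ} (X : Diff n) : Prop :=
  ∀ α ∈ X.support, (α.sum fun _ k => k) = 1

/-- The identity differential operator `1·∂^0`. -/
noncomputable def unitD {n : ℕ} : Diff n := Finsupp.single 0 1

/-- Composition (`⋄`-)power `L^m = L ⋄ ⋯ ⋄ L`. -/
noncomputable def dpow {n : ℕ} (L : Diff n) : ℕ → Diff n
  | 0 => unitD
  | m + 1 => diam L (dpow L m)

/-- Black power `X^{•k} = X • ⋯ • X`. -/
noncomputable def bpow {n : ℕ} (X : Diff n) : ℕ → Diff n
  | 0 => unitD
  | k + 1 => black X (bpow X k)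

theorem pderiv_comm' {n : ℕ} (i j : Fin n) (p : MvPolynomial (Fin n) ℂ) :
    MvPolynomial.pderiv i (MvPolynomial.pderiv j p)
      = MvPolynomial.pderiv j (MvPolynomial.pderiv i p) := by
  induction p using MvPolynomial.induction_on with
  | C a => simp
  | add p q hp hq => simp [hp, hq]
  | mul_X p k hp =>
    simp only [MvPolynomial.pderiv_mul, MvPolynomial.pderiv_X, Pi.single_apply, map_add]
    split_ifs <;> simp_all

theorem commute_pderiv {n : ℕ} (i j : Fin n) :
    Commute ((MvPolynomial.pderiv i).toLinearMap : Module.End ℂ (MvPolynomial (Fin n) ℂ))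
      ((MvPolynomial.pderiv j).toLinearMap) := by
  apply LinearMap.ext
  intro p
  simp [Module.End.mul_apply, pderiv_comm']

theorem prod_ofFn_pow_add {M : Type*} [Monoid M] :
    ∀ (n : ℕ) (f : Fin n → M) (a b : Fin n → ℕ), (∀ i j, Commute (f i) (f j)) →
      (List.ofFn fun i => f i ^ (a i + b i)).prod =
        (List.ofFn fun i => f i ^ a i).prod * (List.ofFn fun i => f i ^ b i).prod := by
  intro n
  induction n with
  | zero => intro f a b h; simp
  | succ m ih =>
    intro f a b h
    have hc : Commute (f 0 ^ b 0) ((List.ofFn fun i : Fin m => f i.succ ^ a i.succ).prod) := by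
      apply Commute.list_prod_right
      intro y hy
      rw [List.mem_ofFn] at hy
      obtain ⟨j, rfl⟩ := hy
      exact (h 0 j.succ).pow_pow _ _
    simp only [List.ofFn_succ, List.prod_cons]
    rw [ih (fun i => f i.succ) (fun i => a i.succ) (fun i => b i.succ) (fun i j => h _ _),
      pow_add, mul_assoc, ← mul_assoc (f 0 ^ b 0), hc.eq, mul_assoc, mul_assoc]

theorem Dop_add {n : ℕ} (α β : Fin n →₀ ℕ) : Dop (α + β) = Dop α * Dop β := by
  unfold Dop
  simpa using prod_ofFn_pow_add n (fun i => (MvPolynomial.pderiv i).toLinearMap)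
    (fun i => α i) (fun i => β i) commute_pderiv

theorem prod_ofFn_eq_single {M : Type*} [Monoid M] :
    ∀ (n : ℕ) (g : Fin n → M) (i : Fin n), (∀ j, j ≠ i → g j = 1) → (List.ofFn g).prod = g i := by
  intro n
  induction n with
  | zero => intro g i; exact absurd i.2 (by omega)
  | succ m ih =>
    intro g i h
    simp only [List.ofFn_succ, List.prod_cons]
    cases i using Fin.cases with
    | zero =>
      have : (List.ofFn fun j : Fin m => g j.succ).prod = 1 := by
        apply List.prod_eq_one
        intro x hx
        rw [List.mem_ofFn] at hx
        obtain ⟨j, rfl⟩ := hx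
        exact h j.succ (Fin.succ_ne_zero j)
      rw [this, mul_one]
    | succ i' =>
      rw [h 0 (Fin.succ_ne_zero i').symm, one_mul]
      exact ih (fun j => g j.succ) i' fun j hj => h j.succ (fun hh => hj (Fin.succ_injective _ hh))

theorem Dop_single {n : ℕ} (i : Fin n) :
    Dop (Finsupp.single i 1) = (MvPolynomial.pderiv i).toLinearMap := by
  unfold Dop
  rw [prod_ofFn_eq_single n _ i ?_]
  · simp
  · intro j hj
    rw [Finsupp.single_apply, if_neg (fun hh => hj hh.symm), pow_zero]

theorem vect_index {n : ℕ} {α : Fin n →₀ ℕ} (h : (α.sum fun _ k => k) = 1) :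
    ∃ i, α = Finsupp.single i 1 := by
  classical
  have hne : α ≠ 0 := by rintro rfl; simp [Finsupp.sum] at h
  obtain ⟨i, hi⟩ := Finsupp.support_nonempty_iff.mpr hne
  refine ⟨i, ?_⟩
  have hsum : ∑ j ∈ α.support, α j = 1 := h
  have hle : α i ≤ 1 := by
    rw [← hsum]
    exact Finset.single_le_sum (f := fun j => α j) (fun _ _ => Nat.zero_le _) hi
  have hpos : 1 ≤ α i := Nat.pos_of_ne_zero (Finsupp.mem_support_iff.mp hi)
  have hαi : α i = 1 := le_antisymm hle hpos
  ext j
  rcases eq_or_ne j i with rfl | hj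
  · simp [hαi]
  · rw [Finsupp.single_apply, if_neg (fun hh => hj hh.symm)]
    by_contra hj0
    have hjs : j ∈ α.support := Finsupp.mem_support_iff.mpr hj0
    have h2 : 2 ≤ ∑ k ∈ α.support, α k := by
      have hij : i ≠ j := fun hh => hj hh.symm
      have hsub : ({i, j} : Finset (Fin n)) ⊆ α.support := by
        intro k hk
        simp only [Finset.mem_insert, Finset.mem_singleton] at hk
        rcases hk with rfl | rfl <;> assumption
      calc 2 ≤ α i + α j := by
              have := Nat.pos_of_ne_zero hj0; omega
        _ = ∑ k ∈ ({i, j} : Finset (Fin n)), α k := (Finset.sum_pair hij).symm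
        _ ≤ _ := Finset.sum_le_sum_of_subset hsub
    omega

-- expansion lemmas

theorem white_expand_right {n : ℕ} (X Y Z : Diff n) :
    white X (white Y Z) = X.sum fun α u => Y.sum fun β v => Z.sum fun γ w =>
      Finsupp.single γ (u * Dop α (v * Dop β w)) := by
  unfold white
  refine Finsupp.sum_congr fun α _ => ?_
  rw [Finsupp.sum_sum_index (fun a => by simp) (fun a b₁ b₂ => by simp [mul_add, Finsupp.single_add])]
  refine Finsupp.sum_congr fun β _ => ?_
  rw [Finsupp.sum_sum_index (fun a => by simp) (fun a b₁ b₂ => by simp [mul_add, Finsupp.single_add])]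
  refine Finsupp.sum_congr fun γ _ => ?_
  rw [Finsupp.sum_single_index (by simp)]

theorem white_expand_left {n : ℕ} (X Y Z : Diff n) :
    white (white X Y) Z = X.sum fun α u => Y.sum fun β v => Z.sum fun γ w =>
      Finsupp.single γ ((u * Dop α v) * Dop β w) := by
  unfold white
  rw [Finsupp.sum_sum_index (fun a => by simp [Finsupp.sum_fun_zero])
    (fun a b₁ b₂ => by
      rw [← Finsupp.sum_add]
      refine Finsupp.sum_congr fun γ _ => ?_
      simp [add_mul, Finsupp.single_add])]
  refine Finsupp.sum_congr fun α _ => ?_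
  rw [Finsupp.sum_sum_index (fun a => by simp [Finsupp.sum_fun_zero])
    (fun a b₁ b₂ => by
      rw [← Finsupp.sum_add]
      refine Finsupp.sum_congr fun γ _ => ?_
      simp [add_mul, Finsupp.single_add])]
  refine Finsupp.sum_congr fun β _ => ?_
  rw [Finsupp.sum_single_index (by simp [Finsupp.sum_fun_zero])]

theorem black_expand_left {n : ℕ} (X Y Z : Diff n) :
    white (black X Y) Z = X.sum fun α u => Y.sum fun β v => Z.sum fun γ w =>
      Finsupp.single γ ((u * v) * Dop (α + β) w) := by
  unfold white black
  rw [Finsupp.sum_sum_index (fun a => by simp [Finsupp.sum_fun_zero])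
    (fun a b₁ b₂ => by
      rw [← Finsupp.sum_add]
      refine Finsupp.sum_congr fun γ _ => ?_
      simp [add_mul, Finsupp.single_add])]
  refine Finsupp.sum_congr fun α _ => ?_
  rw [Finsupp.sum_sum_index (fun a => by simp [Finsupp.sum_fun_zero])
    (fun a b₁ b₂ => by
      rw [← Finsupp.sum_add]
      refine Finsupp.sum_congr fun γ _ => ?_
      simp [add_mul, Finsupp.single_add])]
  refine Finsupp.sum_congr fun β _ => ?_
  rw [Finsupp.sum_single_index (by simp [Finsupp.sum_fun_zero])]

/-- for a vector field `X` and any operators `Y, Z`, the white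
associator satisfies `(X,Y,Z)^∘ = (X • Y) ∘ Z`. -/
theorem white_associator_eq {n : ℕ} (X Y Z : Diff n) (hX : IsVect X) :
    white X (white Y Z) - white (white X Y) Z = white (black X Y) Z := by
  rw [white_expand_right, white_expand_left, black_expand_left, ← Finsupp.sum_sub]
  refine Finsupp.sum_congr fun α hα => ?_
  obtain ⟨i, rfl⟩ := vect_index (hX α hα)
  set u := X (Finsupp.single i 1)
  rw [← Finsupp.sum_sub]
  refine Finsupp.sum_congr fun β hβ => ?_
  set v := Y β
  rw [← Finsupp.sum_sub]
  refine Finsupp.sum_congr fun γ hγ => ?_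
  set w := Z γ
  rw [← Finsupp.single_sub]
  congr 1
  rw [Dop_add, Dop_single]
  simp only [Module.End.mul_apply, Derivation.coeFn_coe]
  rw [MvPolynomial.pderiv_mul]
  ring
end

section
/- If X is a first-order differential operator and Y, Z are any differential operators, then X ∘ (Y ∘ Z) = (X ⋄ Y) ∘ Z, where ⋄ is operator composition and ∘ is the white multiplication. -/
open Finsupp

/- ====================  Auxiliary development  ==================== -/

namespace DiffAux

open MvPolynomial

variable {n : ℕ}

noncomputable abbrev P (i : Fin n) : Module.End ℂ (MvPolynomial (Fin n) ℂ) :=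
  (pderiv i).toLinearMap

lemma pderiv_commute (i j : Fin n) : Commute (P i) (P j) := by
  apply LinearMap.ext
  intro p
  induction p using MvPolynomial.induction_on' with
  | add p q hp hq =>
    simp only [Module.End.mul_apply, map_add] at hp hq ⊢
    rw [hp, hq]
  | monomial s a =>
    rcases eq_or_ne i j with rfl | hij
    · rfl
    simp only [Module.End.mul_apply, P, Derivation.coeFn_coe, pderiv_monomial]
    rw [Finsupp.tsub_apply, Finsupp.tsub_apply, Finsupp.single_eq_of_ne' hij,
      Finsupp.single_eq_of_ne' (Ne.symm hij), Nat.sub_zero, Nat.sub_zero,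
      tsub_tsub, tsub_tsub, add_comm (Finsupp.single j 1)]
    ring_nf

lemma comm_aux (α : Fin n →₀ ℕ) :
    ∀ i ∈ (Finset.univ : Finset (Fin n)), ∀ j ∈ Finset.univ, i ≠ j →
      Commute (P i ^ α i) (P j ^ α j) :=
  fun i _ j _ _ => (pderiv_commute i j).pow_pow _ _

lemma Dop_eq (α : Fin n →₀ ℕ) :
    Dop α = Finset.univ.noncommProd (fun j => P j ^ α j) (comm_aux α) := by
  simp only [Dop, Finset.noncommProd, Fin.univ_val_map, Multiset.noncommProd_coe]

lemma Dop_add (α β : Fin n →₀ ℕ) : Dop (α + β) = Dop α * Dop β := by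
  rw [Dop_eq, Dop_eq, Dop_eq,
    ← Finset.noncommProd_mul_distrib _ _ (comm_aux α) (comm_aux β)
      (fun i _ j _ hij => (pderiv_commute i j).pow_pow _ _)]
  apply Finset.noncommProd_congr rfl
  intro j _
  simp [pow_add]

lemma Dop_zero : (Dop (0 : Fin n →₀ ℕ)) = 1 := by
  rw [Dop_eq]
  exact (Finset.noncommProd_eq_pow_card _ _ _ 1 (by simp)).trans (by simp)

lemma Dop_single_one (i : Fin n) : Dop (Finsupp.single i 1) = P i := by
  rw [Dop_eq,
    Finset.noncommProd_congr (Finset.insert_erase (Finset.mem_univ i)).symm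
      (fun x _ => rfl) (comm_aux (Finsupp.single i 1))]
  refine (Finset.noncommProd_insert_of_notMem _ _ _ _ (Finset.notMem_erase _ _)).trans ?_
  rw [Finset.noncommProd_eq_pow_card _ _ _ 1
      (fun j hj => by simp [Finsupp.single_eq_of_ne' (Finset.ne_of_mem_erase hj).symm])]
  simp

/- ----  additivity lemmas  ---- -/

lemma white_zero_left (Y : Diff n) : white 0 Y = 0 := by
  simp [white]

lemma white_zero_right (X : Diff n) : white X 0 = 0 := by
  simp [white]

lemma white_add_left (X X' Y : Diff n) :
    white (X + X') Y = white X Y + white X' Y := by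
  unfold white
  rw [Finsupp.sum_add_index' (fun α => by simp) (fun α u u' => ?_)]
  rw [← Finsupp.sum_add]
  apply Finsupp.sum_congr
  intro β _
  rw [add_mul, Finsupp.single_add]

lemma white_add_right (X Y Y' : Diff n) :
    white X (Y + Y') = white X Y + white X Y' := by
  unfold white
  rw [← Finsupp.sum_add]
  apply Finsupp.sum_congr
  intro α _
  rw [Finsupp.sum_add_index' (fun β => by simp) (fun β v v' => ?_)]
  rw [map_add, mul_add, Finsupp.single_add]

lemma white_single_single (α β : Fin n →₀ ℕ) (u v : MvPolynomial (Fin n) ℂ) :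
    white (Finsupp.single α u) (Finsupp.single β v)
      = Finsupp.single β (u * Dop α v) := by
  unfold white
  rw [Finsupp.sum_single_index (by simp [Finsupp.sum]),
    Finsupp.sum_single_index (by simp)]

lemma diam_zero_right (X : Diff n) : diam X 0 = 0 := by
  simp [diam]

lemma diam_add_right (X Y Y' : Diff n) :
    diam X (Y + Y') = diam X Y + diam X Y' := by
  unfold diam
  rw [← Finsupp.sum_add]
  apply Finsupp.sum_congr
  intro α _
  rw [Finsupp.sum_add_index' (fun β => by simp) (fun β v v' => ?_)]
  rw [← Finset.sum_add_distrib]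
  apply Finset.sum_congr rfl
  intro γ _
  rw [map_add, mul_add, smul_add, Finsupp.single_add]

lemma diam_single_single (α β : Fin n →₀ ℕ) (u v : MvPolynomial (Fin n) ℂ) :
    diam (Finsupp.single α u) (Finsupp.single β v)
      = ∑ γ ∈ Finset.Iic α, Finsupp.single (α + β - γ)
          (((∏ i, ((α i).choose (γ i)) : ℕ) : ℂ) • (u * Dop γ v)) := by
  unfold diam
  rw [Finsupp.sum_single_index (by simp [Finsupp.sum]),
    Finsupp.sum_single_index (by simp)]

noncomputable def whiteR (Z : Diff n) : Diff n →+ Diff n where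
  toFun X := white X Z
  map_zero' := white_zero_left Z
  map_add' X X' := white_add_left X X' Z

lemma white_sum_left (X Z : Diff n) :
    white X Z = X.sum fun α u => white (Finsupp.single α u) Z := by
  apply Finsupp.sum_congr
  intro α _
  rw [white, Finsupp.sum_single_index (by simp [Finsupp.sum])]

lemma diam_sum_left (X Y : Diff n) :
    diam X Y = X.sum fun α u => diam (Finsupp.single α u) Y := by
  apply Finsupp.sum_congr
  intro α _
  rw [diam, Finsupp.sum_single_index (by simp [Finsupp.sum])]

/- ----  combinatorial lemmas  ---- -/

lemma Iic_single_one (i : Fin n) :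
    Finset.Iic (Finsupp.single i 1) = {0, Finsupp.single i 1} := by
  ext γ
  simp only [Finset.mem_Iic, Finset.mem_insert, Finset.mem_singleton]
  constructor
  · intro h
    by_cases hi : γ i = 0
    · left
      ext j
      rcases eq_or_ne j i with rfl | hj
      · simpa using hi
      · have := h j
        rw [Finsupp.single_eq_of_ne' (Ne.symm hj)] at this
        simpa using this
    · right
      ext j
      rcases eq_or_ne j i with rfl | hj
      · have := h j
        rw [Finsupp.single_eq_same] at this ⊢
        omega
      · have := h j
        rw [Finsupp.single_eq_of_ne' (Ne.symm hj)] at this ⊢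
        omega
  · rintro (rfl | rfl)
    · exact zero_le
    · exact le_refl _

lemma eq_single_of_sum_eq_one {α : Fin n →₀ ℕ} (h : (α.sum fun _ k => k) = 1) :
    ∃ i, α = Finsupp.single i 1 := by
  have hc : Multiset.card (Finsupp.toMultiset α) = 1 := by
    rw [Finsupp.card_toMultiset]; exact h
  obtain ⟨i, hi⟩ := Multiset.card_eq_one.mp hc
  classical
  refine ⟨i, ?_⟩
  have := congrArg Multiset.toFinsupp hi
  rw [Finsupp.toMultiset_toFinsupp] at this
  rw [this]
  simp [Multiset.toFinsupp_singleton]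

/- ----  the core single/single/single computation  ---- -/

lemma diam_vect_single (i : Fin n) (β : Fin n →₀ ℕ) (u v : MvPolynomial (Fin n) ℂ) :
    diam (Finsupp.single (Finsupp.single i 1) u) (Finsupp.single β v)
      = Finsupp.single (Finsupp.single i 1 + β) (u * v)
        + Finsupp.single β (u * pderiv i v) := by
  rw [diam_single_single, Iic_single_one,
    Finset.sum_pair (fun h => one_ne_zero (Finsupp.single_eq_zero.mp h.symm))]
  congr 1
  · rw [tsub_zero]
    congr 1
    have h1 : (∏ j, ((Finsupp.single i 1 : Fin n →₀ ℕ) j).choose ((0 : Fin n →₀ ℕ) j)) = 1 := by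
      simp
    rw [h1, Nat.cast_one, one_smul, Dop_zero, Module.End.one_apply]
  · rw [add_tsub_cancel_left]
    congr 1
    have h1 : (∏ j, ((Finsupp.single i 1 : Fin n →₀ ℕ) j).choose
        ((Finsupp.single i 1 : Fin n →₀ ℕ) j)) = 1 := by
      simp
    rw [h1, Nat.cast_one, one_smul, Dop_single_one]
    rfl

lemma key (i : Fin n) (u : MvPolynomial (Fin n) ℂ) (Y Z : Diff n) :
    white (Finsupp.single (Finsupp.single i 1) u) (white Y Z)
      = white (diam (Finsupp.single (Finsupp.single i 1) u) Y) Z := by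
  induction Y using Finsupp.induction_linear with
  | zero => rw [white_zero_left, white_zero_right, diam_zero_right, white_zero_left]
  | add Y1 Y2 h1 h2 =>
    rw [white_add_left, white_add_right, h1, h2, diam_add_right, white_add_left]
  | single β v =>
    induction Z using Finsupp.induction_linear with
    | zero => rw [white_zero_right, white_zero_right, white_zero_right]
    | add Z1 Z2 h1 h2 =>
      rw [white_add_right, white_add_right, h1, h2, white_add_right]
    | single δ w =>
      rw [white_single_single, white_single_single, diam_vect_single,
        white_add_left, white_single_single, white_single_single, ← Finsupp.single_add]
      congr 1
      have hD : Dop (Finsupp.single i 1 + β) w = pderiv i (Dop β w) := by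
        rw [Dop_add, Dop_single_one]; rfl
      have hP : Dop (Finsupp.single i 1) (v * Dop β w)
          = pderiv i (v * Dop β w) := by
        rw [Dop_single_one]; rfl
      rw [hP, hD, pderiv_mul]
      ring

end DiffAux

/-- for a vector field `X` and any operators `Y, Z`,
`X ∘ (Y ∘ Z) = (X ⋄ Y) ∘ Z`. -/
theorem white_white_eq_diam_white {n : ℕ} (X Y Z : Diff n) (hX : IsVect X) :
    white X (white Y Z) = white (diam X Y) Z := by
  open DiffAux in
  rw [white_sum_left X (white Y Z), diam_sum_left X Y]
  have h3 : white (X.sum fun α u => diam (Finsupp.single α u) Y) Z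
      = X.sum fun α u => white (diam (Finsupp.single α u) Y) Z :=
    map_finsuppSum (whiteR Z) _ _
  rw [h3]
  apply Finsupp.sum_congr
  intro α hα
  obtain ⟨i, rfl⟩ := eq_single_of_sum_eq_one (hX α hα)
  exact key i _ Y Z
end

section
/- For any first-order differential operator L, the exponential generating series of its composition powers satisfies Σ_{m≥0} L^m z^m/m! = exp^•( Σ_{m≥1} (L^{m−1} ∘ L) z^m/m! ), where exp^• is the exponential series with respect to the black multiplication, i.e., Σ_{k≥0} (1/k!)(Σ_{m≥1} (L^{m−1}∘L) z^m/m!)^{•k}, as formal power series in z with coefficients in Diff_n. -/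
open Finsupp

/-- Black-multiplication convolution of two formal power series in `z`
with coefficients in `Diff n`. -/
noncomputable def bconv {n : ℕ} (F G : ℕ → Diff n) : ℕ → Diff n :=
  fun m => ∑ p ∈ Finset.HasAntidiagonal.antidiagonal m, black (F p.1) (G p.2)

/-- Black power of a series: `F^{•k}`. -/
noncomputable def bpowS {n : ℕ} (F : ℕ → Diff n) : ℕ → ℕ → Diff n
  | 0 => fun m => if m = 0 then unitD else 0
  | k + 1 => bconv F (bpowS F k)

namespace ExpBlackAux
open scoped AddMonoidAlgebra
open MvPolynomial

variable {n : ℕ}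

attribute [-instance] Finsupp.instMul Finsupp.instMulZeroClass Finsupp.instSemigroupWithZero
  Finsupp.instNonUnitalNonAssocSemiring Finsupp.instNonUnitalSemiring
  Finsupp.instNonUnitalCommSemiring Finsupp.instNonUnitalNonAssocRing Finsupp.instNonUnitalRing
  Finsupp.instNonUnitalCommRing

abbrev A (n : ℕ) : Type := AddMonoidAlgebra (MvPolynomial (Fin n) ℂ) (Fin n →₀ ℕ)

abbrev R (n : ℕ) : Type := Diff n

noncomputable instance instMulR : Mul (R n) :=
  ⟨fun x y => ((AddMonoidAlgebra.ofCoeff x : A n) * AddMonoidAlgebra.ofCoeff y).coeff⟩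
noncomputable instance instOneR : One (R n) := ⟨(1 : A n).coeff⟩
noncomputable instance instPowR : Pow (R n) ℕ := ⟨fun x k => ((AddMonoidAlgebra.ofCoeff x : A n) ^ k).coeff⟩
noncomputable instance instNatCastR : NatCast (R n) := ⟨fun k => ((k : A n)).coeff⟩
noncomputable instance instIntCastR : IntCast (R n) := ⟨fun k => ((k : A n)).coeff⟩

noncomputable instance instCommRingR : CommRing (R n) :=
  Function.Injective.commRing (fun x : R n => (AddMonoidAlgebra.ofCoeff x : A n))
    (fun _ _ h => congrArg AddMonoidAlgebra.coeff h) rfl rfl (fun _ _ => rfl) (fun _ _ => rfl)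
    (fun _ => rfl) (fun _ _ => rfl) (fun _ _ => rfl) (fun _ _ => rfl) (fun _ _ => rfl)
    (fun _ => rfl) (fun _ => rfl)

noncomputable instance instAlgebraR : Algebra ℂ (R n) :=
  Algebra.ofModule
    (fun r x y => by
      show ((AddMonoidAlgebra.ofCoeff (r • x) : A n) * AddMonoidAlgebra.ofCoeff y).coeff =
        r • ((AddMonoidAlgebra.ofCoeff x : A n) * AddMonoidAlgebra.ofCoeff y).coeff
      rw [AddMonoidAlgebra.ofCoeff_smul, smul_mul_assoc]
      rfl)
    (fun r x y => by
      show ((AddMonoidAlgebra.ofCoeff x : A n) * AddMonoidAlgebra.ofCoeff (r • y)).coeff =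
        r • ((AddMonoidAlgebra.ofCoeff x : A n) * AddMonoidAlgebra.ofCoeff y).coeff
      rw [AddMonoidAlgebra.ofCoeff_smul, mul_smul_comm]
      rfl)

abbrev toR {n : ℕ} (X : Diff n) : R n := X

lemma black_eq_mul (X Y : Diff n) : black X Y = toR X * toR Y := by
  show black X Y = ((AddMonoidAlgebra.ofCoeff X : A n) * AddMonoidAlgebra.ofCoeff Y).coeff
  rw [AddMonoidAlgebra.mul_def]
  unfold black
  apply AddMonoidAlgebra.ofCoeff_injective
  simp only [AddMonoidAlgebra.ofCoeff_coeff, AddMonoidAlgebra.ofCoeff_finsuppSum,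
    AddMonoidAlgebra.ofCoeff_single, AddMonoidAlgebra.coeff_ofCoeff]

lemma unitD_eq_one : (unitD : Diff n) = (1 : R n) := by
  rfl

lemma smul_toR (c : ℂ) (X : Diff n) : toR (c • X) = c • toR X := rfl

lemma pderiv_commute (i j : Fin n) (f : MvPolynomial (Fin n) ℂ) :
    pderiv i (pderiv j f) = pderiv j (pderiv i f) := by
  induction f using MvPolynomial.induction_on with
  | C a => simp [pderiv_C]
  | add p q hp hq => simp [map_add, hp, hq]
  | mul_X p k ih =>
    rcases eq_or_ne j k with rfl | hjk
    · rcases eq_or_ne i j with rfl | hij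
      · rfl
      · simp [pderiv_mul, ih, pderiv_X_self, pderiv_X_of_ne (Ne.symm hij), pderiv_one]
        try ring
    · rcases eq_or_ne i k with rfl | hik
      · simp [pderiv_mul, ih, pderiv_X_self, pderiv_X_of_ne (Ne.symm hjk), pderiv_one]
        try ring
      · simp [pderiv_mul, ih, pderiv_X_of_ne (Ne.symm hjk), pderiv_X_of_ne (Ne.symm hik)]
        try ring

lemma pderiv_commute' (i j : Fin n) :
    Commute ((pderiv i (R := ℂ) (σ := Fin n)).toLinearMap) ((pderiv j).toLinearMap) := by
  apply LinearMap.ext; intro f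
  exact pderiv_commute i j f

lemma ofFn_pow_add {M : Type*} [Monoid M] :
    ∀ {k : ℕ} (f : Fin k → M), (∀ i j, Commute (f i) (f j)) → ∀ (a b : Fin k → ℕ),
      (List.ofFn fun i => f i ^ (a i + b i)).prod =
      (List.ofFn fun i => f i ^ a i).prod * (List.ofFn fun i => f i ^ b i).prod := by
  intro k
  induction k with
  | zero => intro f _ a b; simp
  | succ k ih =>
    intro f hf a b
    simp only [List.ofFn_succ, List.prod_cons]
    rw [ih (fun i => f i.succ) (fun i j => hf i.succ j.succ) (fun i => a i.succ) (fun i => b i.succ)]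
    have hcomm : Commute (f 0 ^ b 0) (List.ofFn fun i : Fin k => f i.succ ^ a i.succ).prod := by
      apply Commute.list_prod_right
      intro y hy
      rw [List.mem_ofFn] at hy
      obtain ⟨i, rfl⟩ := hy
      exact ((hf 0 i.succ).pow_pow _ _)
    rw [pow_add]
    rw [mul_assoc, mul_assoc, ← mul_assoc (f 0 ^ b 0), hcomm.eq, mul_assoc]

lemma Dop_add (α β : Fin n →₀ ℕ) : Dop (α + β) = Dop α * Dop β := by
  unfold Dop
  simpa using ofFn_pow_add (fun i : Fin n => ((pderiv i (R := ℂ)).toLinearMap)) pderiv_commute' α β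

lemma Dop_zero : Dop (0 : Fin n →₀ ℕ) = 1 := by
  unfold Dop
  rw [List.prod_eq_one]
  intro x hx
  rw [List.mem_ofFn] at hx
  obtain ⟨i, rfl⟩ := hx
  simp

lemma ofFn_prod_if {M : Type*} [Monoid M] :
    ∀ {k : ℕ} (f : Fin k → M) (i : Fin k),
      (List.ofFn fun j => if j = i then f j else 1).prod = f i := by
  intro k
  induction k with
  | zero => intro f i; exact absurd i.2 (by simp)
  | succ k ih =>
    intro f i
    simp only [List.ofFn_succ, List.prod_cons]
    rcases Fin.eq_zero_or_eq_succ i with rfl | ⟨i', rfl⟩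
    · have h1 : (List.ofFn fun j : Fin k => if j.succ = (0 : Fin (k+1)) then f j.succ else 1).prod = 1 := by
        apply List.prod_eq_one
        intro x hx
        rw [List.mem_ofFn] at hx
        obtain ⟨j, rfl⟩ := hx
        simp [Fin.succ_ne_zero]
      simp [h1]
    · rw [if_neg (Fin.succ_ne_zero i').symm, one_mul]
      have := ih (fun j => f j.succ) i'
      simp only [Fin.succ_inj] at this ⊢
      exact this

lemma Dop_single (i : Fin n) : Dop (Finsupp.single i 1) = (pderiv i (R := ℂ)).toLinearMap := by
  unfold Dop
  have : (fun j : Fin n => ((pderiv j (R := ℂ)).toLinearMap) ^ ((Finsupp.single i 1) j)) =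
      (fun j : Fin n => if j = i then (pderiv j (R := ℂ)).toLinearMap else 1) := by
    funext j
    rcases eq_or_ne j i with rfl | h
    · simp
    · simp [Finsupp.single_apply, (Ne.symm h), h]
  rw [this, ofFn_prod_if]


open Finsupp

lemma white_single_single (α β : Fin n →₀ ℕ) (u v : MvPolynomial (Fin n) ℂ) :
    white (Finsupp.single α u) (Finsupp.single β v) = Finsupp.single β (u * Dop α v) := by
  unfold white
  rw [Finsupp.sum_single_index, Finsupp.sum_single_index]
  · simp
  · rw [Finsupp.sum_single_index] <;> simp

lemma white_zero_left (Y : Diff n) : white 0 Y = 0 := by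
  unfold white; exact Finsupp.sum_zero_index

lemma white_zero_right (X : Diff n) : white X 0 = 0 := by
  unfold white; simp [Finsupp.sum_zero_index]

lemma white_add_left (X X' Y : Diff n) : white (X + X') Y = white X Y + white X' Y := by
  unfold white
  apply Finsupp.sum_add_index <;> intros <;> simp [add_mul, Finsupp.single_add, Finsupp.sum_add]

lemma white_add_right (X Y Y' : Diff n) : white X (Y + Y') = white X Y + white X Y' := by
  unfold white
  rw [← Finsupp.sum_add]
  congr 1
  funext α u
  apply Finsupp.sum_add_index <;> intros <;> simp [mul_add, Finsupp.single_add]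

lemma white_smul_left (c : ℂ) (X Y : Diff n) : white (c • X) Y = c • white X Y := by
  unfold white
  rw [Finsupp.sum_smul_index' (fun α => by simp [Finsupp.sum_zero_index] :
    ∀ α : Fin n →₀ ℕ, (Y.sum fun β v => Finsupp.single β ((0 : MvPolynomial (Fin n) ℂ) * Dop α v)) = 0),
    Finsupp.smul_sum]
  congr 1
  funext α u
  rw [Finsupp.smul_sum]
  congr 1
  funext β v
  rw [smul_mul_assoc, Finsupp.smul_single]

lemma white_smul_right (c : ℂ) (X Y : Diff n) : white X (c • Y) = c • white X Y := by
  unfold white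
  rw [Finsupp.smul_sum]
  congr 1
  funext α u
  rw [Finsupp.sum_smul_index' (fun β => by simp : ∀ β : Fin n →₀ ℕ,
      (Finsupp.single β (u * Dop α (0 : MvPolynomial (Fin n) ℂ))) = 0),
    Finsupp.smul_sum]
  congr 1
  funext β v
  rw [map_smul, mul_smul_comm, Finsupp.smul_single]


/-- white as a linear map in the right argument. -/
noncomputable def whiteL (X : Diff n) : Diff n →ₗ[ℂ] Diff n where
  toFun := white X
  map_add' := white_add_right X
  map_smul' c Y := white_smul_right c X Y

/-- white as a linear map in the left argument. -/
noncomputable def whiteR (Y : Diff n) : Diff n →ₗ[ℂ] Diff n where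
  toFun := (white · Y)
  map_add' X X' := white_add_left X X' Y
  map_smul' c X := white_smul_left c X Y

lemma diam_zero_left (Y : Diff n) : diam 0 Y = 0 := by
  unfold diam; exact Finsupp.sum_zero_index

lemma diam_add_left (X X' Y : Diff n) : diam (X + X') Y = diam X Y + diam X' Y := by
  unfold diam
  apply Finsupp.sum_add_index <;> intros <;>
    simp [add_mul, smul_add, Finsupp.single_add, Finsupp.sum_add, Finset.sum_add_distrib]

lemma diam_zero_right (X : Diff n) : diam X 0 = 0 := by
  unfold diam; simp [Finsupp.sum_zero_index]

lemma diam_add_right (X Y Y' : Diff n) : diam X (Y + Y') = diam X Y + diam X Y' := by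
  unfold diam
  rw [← Finsupp.sum_add]
  congr 1
  funext α u
  apply Finsupp.sum_add_index <;> intros <;>
    simp [mul_add, smul_add, Finsupp.single_add, Finset.sum_add_distrib]

lemma deg_one_single {α : Fin n →₀ ℕ} (h : (α.sum fun _ k => k) = 1) :
    ∃ i : Fin n, α = Finsupp.single i 1 := by
  classical
  have hs : ∑ j ∈ α.support, α j = 1 := h
  have hne : α.support.Nonempty := by
    rcases Finset.eq_empty_or_nonempty α.support with he | hne
    · rw [he] at hs; simp at hs
    · exact hne
  obtain ⟨i, hi⟩ := hne
  have hi1 : 1 ≤ α i := Nat.one_le_iff_ne_zero.mpr (Finsupp.mem_support_iff.mp hi)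
  have hsplit : α i + ∑ j ∈ α.support.erase i, α j = 1 := by
    rw [Finset.add_sum_erase _ _ hi]; exact hs
  have hαi : α i = 1 := le_antisymm (by omega) hi1
  have hrest : ∑ j ∈ α.support.erase i, α j = 0 := by omega
  refine ⟨i, ?_⟩
  ext j
  rcases eq_or_ne j i with rfl | hj
  · simp [hαi]
  · rw [Finsupp.single_apply, if_neg (Ne.symm hj)]
    by_contra hne0
    have hjm : j ∈ α.support.erase i := by
      rw [Finset.mem_erase]
      exact ⟨hj, Finsupp.mem_support_iff.mpr hne0⟩
    have := Finset.sum_eq_zero_iff.mp hrest j hjm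
    exact hne0 this

lemma vect_ind (P : Diff n → Prop) (h0 : P 0)
    (hadd : ∀ X Y, P X → P Y → P (X + Y))
    (hs : ∀ (i : Fin n) (u : MvPolynomial (Fin n) ℂ), P (Finsupp.single (Finsupp.single i 1) u)) :
    ∀ L : Diff n, IsVect L → P L := by
  intro L hL
  induction L using Finsupp.induction with
  | zero => exact h0
  | single_add α u f hαf hu ih =>
    have hsupp : (Finsupp.single α u + f).support = insert α f.support := by
      rw [Finsupp.support_add_eq, Finsupp.support_single_ne_zero α hu]
      · exact rfl
      · rw [Finsupp.support_single_ne_zero α hu]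
        simpa using hαf
    have hα : (α.sum fun _ k => k) = 1 := by
      apply hL
      rw [hsupp]
      exact Finset.mem_insert_self _ _
    have hf : IsVect f := by
      intro β hβ
      apply hL
      rw [hsupp]
      exact Finset.mem_insert_of_mem hβ
    obtain ⟨i, rfl⟩ := deg_one_single hα
    exact hadd _ _ (hs i u) (ih hf)

lemma Iic_single_one (i : Fin n) :
    Finset.Iic (Finsupp.single i 1 : Fin n →₀ ℕ) = {0, Finsupp.single i 1} := by
  ext γ
  simp only [Finset.mem_Iic, Finset.mem_insert, Finset.mem_singleton]
  constructor
  · intro h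
    rw [Finsupp.le_def] at h
    rcases Nat.eq_zero_or_pos (γ i) with h0 | h1
    · left
      ext j
      rcases eq_or_ne j i with rfl | hj
      · simpa using h0
      · have := h j
        rw [Finsupp.single_apply, if_neg (Ne.symm hj)] at this
        simpa using this
    · right
      ext j
      rcases eq_or_ne j i with rfl | hj
      · have := h j
        rw [Finsupp.single_apply, if_pos rfl] at this
        rw [Finsupp.single_apply, if_pos rfl]
        omega
      · have := h j
        rw [Finsupp.single_apply, if_neg (Ne.symm hj)] at this
        rw [Finsupp.single_apply, if_neg (Ne.symm hj)]
        omega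
  · rintro (rfl | rfl)
    · exact zero_le
    · exact le_refl _

lemma black_single_single (α β : Fin n →₀ ℕ) (u v : MvPolynomial (Fin n) ℂ) :
    black (Finsupp.single α u) (Finsupp.single β v) = Finsupp.single (α + β) (u * v) := by
  unfold black
  rw [Finsupp.sum_single_index, Finsupp.sum_single_index] <;> simp

lemma diam_single_single (i : Fin n) (β : Fin n →₀ ℕ) (u v : MvPolynomial (Fin n) ℂ) :
    diam (Finsupp.single (Finsupp.single i 1) u) (Finsupp.single β v) =
      Finsupp.single β (u * Dop (Finsupp.single i 1) v) +
      Finsupp.single (Finsupp.single i 1 + β) (u * v) := by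
  unfold diam
  rw [Finsupp.sum_single_index, Finsupp.sum_single_index]
  · rw [Iic_single_one]
    have hne : (0 : Fin n →₀ ℕ) ∉ ({Finsupp.single i 1} : Finset (Fin n →₀ ℕ)) := by
      rw [Finset.mem_singleton]
      have hone : (Finsupp.single i 1 : Fin n →₀ ℕ) ≠ 0 := by simp
      exact fun h => hone h.symm
    rw [Finset.sum_insert hne, Finset.sum_singleton]
    have h1 : ∀ j : Fin n, ((Finsupp.single i 1 : Fin n →₀ ℕ) j).choose ((0 : Fin n →₀ ℕ) j) = 1 := by
      intro j; simp
    have h2 : ∀ j : Fin n, ((Finsupp.single i 1 : Fin n →₀ ℕ) j).choose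
        ((Finsupp.single i 1 : Fin n →₀ ℕ) j) = 1 := by
      intro j; simp
    simp only [h1, h2, Finset.prod_const_one, Nat.cast_one, one_smul]
    rw [tsub_zero, add_tsub_cancel_left, Dop_zero]
    simp [add_comm]
  · simp
  · rw [Finsupp.sum_single_index] <;> simp

lemma white_unitD_left (X : Diff n) : white unitD X = X := by
  unfold white unitD
  rw [Finsupp.sum_single_index]
  · rw [Dop_zero]
    simp only [Module.End.one_apply, one_mul]
    exact Finsupp.sum_single X
  · simp [Finsupp.sum_zero_index]

lemma diam_vect (L : Diff n) (hL : IsVect L) : ∀ X : Diff n, diam L X = white L X + black L X := by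
  refine vect_ind (fun L => ∀ X : Diff n, diam L X = white L X + black L X) ?_ ?_ ?_ L hL
  · intro X
    rw [diam_zero_left, white_zero_left, black_eq_mul]
    simp
  · intro X Y hX hY Z
    rw [diam_add_left, white_add_left, hX, hY, black_eq_mul, black_eq_mul, black_eq_mul]
    show _ = _ + (toR X + toR Y) * toR Z
    rw [add_mul]
    abel
  · intro i u X
    induction X using Finsupp.induction with
    | zero => rw [diam_zero_right, white_zero_right, black_eq_mul]; simp
    | single_add β v f hβf hv ih =>
      rw [diam_add_right, white_add_right, ih, black_eq_mul, black_eq_mul]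
      show _ = _ + toR _ * (toR (Finsupp.single β v) + toR f)
      rw [mul_add, diam_single_single, white_single_single,
        ← black_eq_mul (Finsupp.single (Finsupp.single i 1) u) (Finsupp.single β v),
        black_single_single]
      abel


lemma black_zero_left (Y : Diff n) : black 0 Y = 0 := by
  rw [black_eq_mul]; exact zero_mul (toR Y)

lemma black_zero_right (X : Diff n) : black X 0 = 0 := by
  rw [black_eq_mul]; exact mul_zero (toR X)

lemma black_add_left (X X' Y : Diff n) : black (X + X') Y = black X Y + black X' Y := by
  rw [black_eq_mul, black_eq_mul, black_eq_mul]; exact add_mul (toR X) (toR X') (toR Y)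

lemma black_add_right (X Y Y' : Diff n) : black X (Y + Y') = black X Y + black X Y' := by
  rw [black_eq_mul, black_eq_mul, black_eq_mul]; exact mul_add (toR X) (toR Y) (toR Y')

lemma pd_apply (i : Fin n) (v : MvPolynomial (Fin n) ℂ) :
    Dop (Finsupp.single i 1) v = MvPolynomial.pderiv i v := by
  rw [Dop_single]; rfl

lemma white_black_vect (L : Diff n) (hL : IsVect L) :
    ∀ X Y : Diff n, white L (black X Y) = black (white L X) Y + black X (white L Y) := by
  refine vect_ind (fun L => ∀ X Y : Diff n,
    white L (black X Y) = black (white L X) Y + black X (white L Y)) ?_ ?_ ?_ L hL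
  · intro X Y
    simp [white_zero_left, black_zero_left, black_zero_right]
  · intro A B hA hB X Y
    rw [white_add_left, white_add_left, white_add_left, hA, hB, black_add_left, black_add_right]
    abel
  · intro i u X
    induction X using Finsupp.induction with
    | zero =>
      intro Y
      simp [white_zero_left, white_zero_right, black_zero_left, black_zero_right]
    | single_add β v f hβf hv ihX =>
      intro Y
      rw [black_add_left, white_add_right, ihX, white_add_right, black_add_left, black_add_left]
      have key : white (Finsupp.single (Finsupp.single i 1) u) (black (Finsupp.single β v) Y) =
          black (white (Finsupp.single (Finsupp.single i 1) u) (Finsupp.single β v)) Y +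
          black (Finsupp.single β v) (white (Finsupp.single (Finsupp.single i 1) u) Y) := by
        induction Y using Finsupp.induction with
        | zero => simp [white_zero_left, white_zero_right, black_zero_left, black_zero_right]
        | single_add ζ w g hζg hw ihY =>
          rw [black_add_right, white_add_right, ihY, white_add_right, black_add_right,
            black_add_right]
          have key2 : white (Finsupp.single (Finsupp.single i 1) u)
              (black (Finsupp.single β v) (Finsupp.single ζ w)) =
              black (white (Finsupp.single (Finsupp.single i 1) u) (Finsupp.single β v))
                (Finsupp.single ζ w) +
              black (Finsupp.single β v)
                (white (Finsupp.single (Finsupp.single i 1) u) (Finsupp.single ζ w)) := by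
            rw [black_single_single, white_single_single, white_single_single,
              white_single_single, black_single_single, black_single_single, ← Finsupp.single_add]
            congr 1
            rw [pd_apply, pd_apply, pd_apply, MvPolynomial.pderiv_mul]
            ring
          rw [key2]
          abel
      rw [key]
      abel

lemma white_white_vect (L : Diff n) (hL : IsVect L) :
    ∀ X Y : Diff n, white L (white X Y) = white (white L X) Y + white (black L X) Y := by
  refine vect_ind (fun L => ∀ X Y : Diff n,
    white L (white X Y) = white (white L X) Y + white (black L X) Y) ?_ ?_ ?_ L hL
  · intro X Y
    simp [white_zero_left, black_zero_left, black_zero_right, white_zero_right]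
  · intro A B hA hB X Y
    rw [white_add_left, white_add_left, hA, hB, black_add_left, white_add_left, white_add_left]
    abel
  · intro i u X
    induction X using Finsupp.induction with
    | zero =>
      intro Y
      simp [white_zero_left, white_zero_right, black_zero_left, black_zero_right]
    | single_add β v f hβf hv ihX =>
      intro Y
      rw [white_add_left, white_add_right, ihX, white_add_right, black_add_right, white_add_left,
        white_add_left]
      have key : white (Finsupp.single (Finsupp.single i 1) u)
          (white (Finsupp.single β v) Y) =
          white (white (Finsupp.single (Finsupp.single i 1) u) (Finsupp.single β v)) Y +
          white (black (Finsupp.single (Finsupp.single i 1) u) (Finsupp.single β v)) Y := by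
        induction Y using Finsupp.induction with
        | zero => simp [white_zero_left, white_zero_right, black_zero_left, black_zero_right]
        | single_add ζ w g hζg hw ihY =>
          rw [white_add_right, white_add_right, ihY, white_add_right, white_add_right]
          have key2 : white (Finsupp.single (Finsupp.single i 1) u)
              (white (Finsupp.single β v) (Finsupp.single ζ w)) =
              white (white (Finsupp.single (Finsupp.single i 1) u) (Finsupp.single β v))
                (Finsupp.single ζ w) +
              white (black (Finsupp.single (Finsupp.single i 1) u) (Finsupp.single β v))
                (Finsupp.single ζ w) := by
            rw [white_single_single, white_single_single, black_single_single,
              white_single_single, white_single_single, white_single_single, ← Finsupp.single_add]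
            congr 1
            rw [pd_apply, pd_apply, MvPolynomial.pderiv_mul, Dop_add, Dop_single,
              Module.End.mul_apply]
            have hco : ((MvPolynomial.pderiv i).toLinearMap) ((Dop β) w) =
                MvPolynomial.pderiv i ((Dop β) w) := rfl
            rw [hco]
            ring
          rw [key2]
          abel
      rw [key]
      abel


lemma sum_ad_fst {M : Type*} [AddCommMonoid M] [Module ℂ M] (h : ℕ → ℕ → M) (m : ℕ) :
    ∑ p ∈ Finset.HasAntidiagonal.antidiagonal (m+1), (p.1 : ℂ) • h p.1 p.2 =
    ∑ p ∈ Finset.HasAntidiagonal.antidiagonal m, ((p.1 + 1 : ℕ) : ℂ) • h (p.1 + 1) p.2 := by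
  rw [Finset.Nat.sum_antidiagonal_eq_sum_range_succ_mk,
    Finset.Nat.sum_antidiagonal_eq_sum_range_succ_mk, Finset.sum_range_succ']
  simp only [Nat.cast_zero, zero_smul, add_zero, Nat.cast_add, Nat.cast_one]
  apply Finset.sum_congr rfl
  intro i _
  congr 2 <;> omega

lemma sum_ad_snd {M : Type*} [AddCommMonoid M] [Module ℂ M] (h : ℕ → ℕ → M) (m : ℕ) :
    ∑ p ∈ Finset.HasAntidiagonal.antidiagonal (m+1), (p.2 : ℂ) • h p.1 p.2 =
    ∑ p ∈ Finset.HasAntidiagonal.antidiagonal m, ((p.2 + 1 : ℕ) : ℂ) • h p.1 (p.2 + 1) := by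
  rw [Finset.Nat.sum_antidiagonal_eq_sum_range_succ_mk,
    Finset.Nat.sum_antidiagonal_eq_sum_range_succ_mk, Finset.sum_range_succ]
  simp only [Nat.sub_self, Nat.cast_zero, zero_smul, add_zero]
  apply Finset.sum_congr rfl
  intro i hi
  rw [Finset.mem_range] at hi
  have h1 : m + 1 - i = (m - i) + 1 := by omega
  rw [h1]

lemma fact_succ_inv (a : ℕ) :
    (a.factorial : ℂ)⁻¹ = ((a + 1 : ℕ) : ℂ) * ((a+1).factorial : ℂ)⁻¹ := by
  rw [Nat.factorial_succ]
  push_cast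
  rw [mul_inv]
  rw [← mul_assoc, mul_inv_cancel₀ (by exact_mod_cast Nat.succ_ne_zero a), one_mul]

lemma fact_succ_inv' (a : ℕ) :
    (a.factorial : ℂ)⁻¹ = ((a+1).factorial : ℂ)⁻¹ * ((a + 1 : ℕ) : ℂ) := by
  rw [fact_succ_inv a, mul_comm]

lemma white_unitD_right (L : Diff n) (hL : IsVect L) : white L unitD = 0 := by
  refine vect_ind (fun L => white L unitD = 0) ?_ ?_ ?_ L hL
  · exact white_zero_left unitD
  · intro X Y hX hY; rw [white_add_left, hX, hY, add_zero]
  · intro i u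
    unfold unitD
    rw [white_single_single, pd_apply, MvPolynomial.pderiv_one, mul_zero, Finsupp.single_zero]

lemma black_unitD_right (X : Diff n) : black X unitD = X := by
  rw [black_eq_mul, unitD_eq_one]
  show toR X * (1 : R n) = toR X
  rw [mul_one]

lemma dpow_succ (L : Diff n) (m : ℕ) : dpow L (m+1) = diam L (dpow L m) := rfl

lemma dpow_one (L : Diff n) (hL : IsVect L) : dpow L 1 = L := by
  rw [dpow_succ]
  show diam L unitD = L
  rw [diam_vect L hL, white_unitD_right L hL, black_unitD_right, zero_add]

lemma W_succ (L : Diff n) (hL : IsVect L) (a : ℕ) :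
    white L (white (dpow L a) L) = white (dpow L (a+1)) L := by
  rw [white_white_vect L hL, ← white_add_left, ← diam_vect L hL, dpow_succ]

lemma white_L_dpow (L : Diff n) (hL : IsVect L) (b : ℕ) :
    white L (dpow L b) = dpow L (b+1) - black L (dpow L b) := by
  rw [dpow_succ, diam_vect L hL]
  abel


lemma white_sum_right {ι : Type*} (X : Diff n) (s : Finset ι) (f : ι → Diff n) :
    white X (∑ i ∈ s, f i) = ∑ i ∈ s, white X (f i) :=
  map_sum (whiteL X) f s

section Star
variable (L : Diff n)

/-- scaled coefficients -/
noncomputable def wc (L : Diff n) (a : ℕ) : R n :=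
  (a.factorial : ℂ)⁻¹ • toR (white (dpow L a) L)

noncomputable def qc (L : Diff n) (b : ℕ) : R n :=
  (b.factorial : ℂ)⁻¹ • toR (dpow L b)

set_option maxHeartbeats 1000000 in
lemma claim1 (hL : IsVect L) (a b : ℕ) :
    toR (white L (wc L a * qc L b)) + toR L * (wc L a * qc L b) =
      ((a+1 : ℕ) : ℂ) • (wc L (a+1) * qc L b) + ((b+1 : ℕ) : ℂ) • (wc L a * qc L (b+1)) := by
  have h1 : toR (white L (wc L a * qc L b)) =
      toR (white L (wc L a)) * qc L b + wc L a * toR (white L (qc L b)) := by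
    rw [← black_eq_mul (wc L a) (qc L b), white_black_vect L hL, black_eq_mul, black_eq_mul]
  have h2 : toR (white L (wc L a)) = ((a+1 : ℕ) : ℂ) • wc L (a+1) := by
    show toR (white L (((a.factorial : ℂ))⁻¹ • white (dpow L a) L)) = _
    rw [white_smul_right, W_succ L hL]
    show ((a.factorial : ℂ))⁻¹ • toR (white (dpow L (a+1)) L) = _
    rw [fact_succ_inv a, wc, mul_smul]
  have h3 : toR (white L (qc L b)) =
      ((b+1 : ℕ) : ℂ) • qc L (b+1) - (b.factorial : ℂ)⁻¹ • (toR L * toR (dpow L b)) := by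
    show toR (white L (((b.factorial : ℂ))⁻¹ • dpow L b)) = _
    rw [white_smul_right, white_L_dpow L hL]
    show ((b.factorial : ℂ))⁻¹ • (toR (dpow L (b+1)) - toR (black L (dpow L b))) = _
    rw [black_eq_mul, smul_sub]
    congr 1
    rw [fact_succ_inv b, qc, mul_smul]
  have h4 : wc L a * ((b.factorial : ℂ)⁻¹ • (toR L * toR (dpow L b))) =
      toR L * (wc L a * qc L b) := by
    rw [qc]
    simp only [mul_smul_comm, smul_mul_assoc, smul_smul]
    rw [mul_left_comm]
  rw [h1, h2, h3, mul_sub, h4, smul_mul_assoc, mul_smul_comm]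
  abel

lemma star (hL : IsVect L) (m : ℕ) :
    ((m.factorial : ℂ))⁻¹ • toR (dpow L (m+1)) =
      ∑ p ∈ Finset.HasAntidiagonal.antidiagonal m, wc L p.1 * qc L p.2 := by
  induction m with
  | zero =>
    rw [Finset.Nat.antidiagonal_zero, Finset.sum_singleton, dpow_one L hL, wc, qc]
    simp only [Nat.factorial_zero, Nat.cast_one, inv_one, one_smul]
    show toR L = toR (white unitD L) * toR unitD
    rw [white_unitD_left, unitD_eq_one, mul_one]
  | succ m ih =>
    have hfact : (m.factorial : ℂ) ≠ 0 := by
      exact_mod_cast Nat.factorial_ne_zero m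
    have hP1 : dpow L (m+1) = (m.factorial : ℂ) •
        ∑ p ∈ Finset.HasAntidiagonal.antidiagonal m, wc L p.1 * qc L p.2 := by
      rw [← ih, smul_smul, mul_inv_cancel₀ hfact, one_smul]
    have hP2 : toR (dpow L (m+2)) = toR (white L (dpow L (m+1))) + toR L * toR (dpow L (m+1)) := by
      show toR (diam L (dpow L (m+1))) = _
      rw [diam_vect L hL, black_eq_mul]
    have key : toR (dpow L (m+2)) = (m.factorial : ℂ) •
        ∑ p ∈ Finset.HasAntidiagonal.antidiagonal m,
          (toR (white L (wc L p.1 * qc L p.2)) + toR L * (wc L p.1 * qc L p.2)) := by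
      rw [hP2, hP1, white_smul_right, white_sum_right, mul_smul_comm, Finset.mul_sum,
        ← smul_add, ← Finset.sum_add_distrib]
    rw [key]
    have key2 : ∑ p ∈ Finset.HasAntidiagonal.antidiagonal m,
        (toR (white L (wc L p.1 * qc L p.2)) + toR L * (wc L p.1 * qc L p.2)) =
        ((m+1 : ℕ) : ℂ) • ∑ p ∈ Finset.HasAntidiagonal.antidiagonal (m+1), wc L p.1 * qc L p.2 := by
      have hcong : ∀ p ∈ Finset.HasAntidiagonal.antidiagonal m,
          toR (white L (wc L p.1 * qc L p.2)) + toR L * (wc L p.1 * qc L p.2) =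
          ((p.1+1 : ℕ) : ℂ) • (wc L (p.1+1) * qc L p.2) +
          ((p.2+1 : ℕ) : ℂ) • (wc L p.1 * qc L (p.2+1)) := fun p _ => claim1 L hL p.1 p.2
      rw [Finset.sum_congr rfl hcong, Finset.sum_add_distrib,
        ← sum_ad_fst (fun a b => wc L a * qc L b) m, ← sum_ad_snd (fun a b => wc L a * qc L b) m,
        ← Finset.sum_add_distrib, Finset.smul_sum]
      apply Finset.sum_congr rfl
      intro p hp
      rw [← add_smul, ← Nat.cast_add, Finset.HasAntidiagonal.mem_antidiagonal.mp hp]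
    rw [key2, smul_smul, smul_smul]
    have hm1 : ((m+1 : ℕ) : ℂ) ≠ 0 := by exact_mod_cast Nat.succ_ne_zero m
    have hfs : ((m+1).factorial : ℂ) = (m.factorial : ℂ) * ((m+1 : ℕ) : ℂ) := by
      rw [Nat.factorial_succ]
      push_cast
      ring
    have hone : ((m+1).factorial : ℂ)⁻¹ * (m.factorial : ℂ) * ((m+1 : ℕ) : ℂ) = 1 := by
      rw [hfs, mul_inv]
      field_simp
    rw [hone, one_smul]

end Star

open PowerSeries

lemma coeff_pow_zero {f : PowerSeries (R n)} (hf : PowerSeries.constantCoeff f = 0) :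
    ∀ {k m : ℕ}, m < k → PowerSeries.coeff m (f ^ k) = 0 := by
  intro k
  induction k with
  | zero => intro m hm; omega
  | succ k ih =>
    intro m hm
    rw [pow_succ', PowerSeries.coeff_mul]
    apply Finset.sum_eq_zero
    intro p hp
    have hpm := Finset.HasAntidiagonal.mem_antidiagonal.mp hp
    rcases Nat.eq_zero_or_pos p.1 with h0 | h1
    · rw [h0, PowerSeries.coeff_zero_eq_constantCoeff, hf, zero_mul]
    · have : p.2 < k := by omega
      rw [ih this, mul_zero]

section Main
variable (L : Diff n)

noncomputable def Fstmt (L : Diff n) : ℕ → Diff n := fun j =>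
  if j = 0 then 0 else ((j.factorial : ℂ)⁻¹) • white (dpow L (j - 1)) L

noncomputable def Fser (L : Diff n) : PowerSeries (R n) :=
  PowerSeries.mk fun j => toR (Fstmt L j)

noncomputable def Gser (L : Diff n) : PowerSeries (R n) :=
  PowerSeries.mk fun m => (m.factorial : ℂ)⁻¹ • toR (dpow L m)

noncomputable def Eser (L : Diff n) : PowerSeries (R n) :=
  PowerSeries.mk fun m =>
    ∑ k ∈ Finset.range (m+1), (k.factorial : ℂ)⁻¹ • PowerSeries.coeff m (Fser L ^ k)

lemma constantCoeff_Fser : PowerSeries.constantCoeff (Fser L) = 0 := by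
  rw [← PowerSeries.coeff_zero_eq_constantCoeff, Fser, PowerSeries.coeff_mk, Fstmt]
  simp

lemma coeff_dF (a : ℕ) : PowerSeries.coeff a (d⁄dX (R n) (Fser L)) = wc L a := by
  rw [PowerSeries.coeff_derivative, Fser, PowerSeries.coeff_mk, Fstmt]
  rw [if_neg (Nat.succ_ne_zero a)]
  have h1 : a + 1 - 1 = a := by omega
  rw [h1]
  have h2 : toR (((a+1).factorial : ℂ)⁻¹ • white (dpow L a) L) =
      ((a+1).factorial : ℂ)⁻¹ • toR (white (dpow L a) L) := rfl
  rw [h2, ← Nat.cast_succ, mul_comm, ← nsmul_eq_mul, ← Nat.cast_smul_eq_nsmul ℂ, smul_smul,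
    ← fact_succ_inv, wc]

lemma coeff_Gser (b : ℕ) :
    PowerSeries.coeff b (Gser L) = qc L b := by
  rw [Gser, PowerSeries.coeff_mk, qc]

lemma ODE_G (hL : IsVect L) : d⁄dX (R n) (Gser L) = d⁄dX (R n) (Fser L) * Gser L := by
  apply PowerSeries.ext
  intro m
  rw [PowerSeries.coeff_derivative, coeff_Gser, PowerSeries.coeff_mul]
  have hrhs : ∀ p ∈ Finset.HasAntidiagonal.antidiagonal m,
      PowerSeries.coeff p.1 (d⁄dX (R n) (Fser L)) * PowerSeries.coeff p.2 (Gser L) =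
      wc L p.1 * qc L p.2 := by
    intro p _
    rw [coeff_dF, coeff_Gser]
  rw [Finset.sum_congr rfl hrhs, ← star L hL m, qc]
  rw [← Nat.cast_succ, mul_comm, ← nsmul_eq_mul, ← Nat.cast_smul_eq_nsmul ℂ, smul_smul,
    ← fact_succ_inv]

lemma ODE_E : d⁄dX (R n) (Eser L) = d⁄dX (R n) (Fser L) * Eser L := by
  apply PowerSeries.ext
  intro m
  rw [PowerSeries.coeff_derivative]
  rw [show PowerSeries.coeff (m+1) (Eser L) =
    ∑ k ∈ Finset.range (m+2), (k.factorial : ℂ)⁻¹ •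
      PowerSeries.coeff (m+1) (Fser L ^ k) from PowerSeries.coeff_mk _ _]
  rw [Finset.sum_mul]
  have step1 : ∀ k ∈ Finset.range (m+2),
      ((k.factorial : ℂ)⁻¹ • PowerSeries.coeff (m+1) (Fser L ^ k)) * ((m : R n) + 1) =
      (k.factorial : ℂ)⁻¹ • PowerSeries.coeff m (d⁄dX (R n) (Fser L ^ k)) := by
    intro k _
    rw [smul_mul_assoc, PowerSeries.coeff_derivative]
  rw [Finset.sum_congr rfl step1, Finset.sum_range_succ']
  have h00 : ((Nat.factorial 0 : ℂ))⁻¹ •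
      PowerSeries.coeff m (d⁄dX (R n) (Fser L ^ 0)) = 0 := by
    rw [pow_zero]
    rw [show d⁄dX (R n) (1 : PowerSeries (R n)) = 0 from Derivation.map_one_eq_zero _]
    rw [map_zero, smul_zero]
  rw [h00, add_zero]
  have step2 : ∀ j ∈ Finset.range (m+1),
      (((j+1).factorial : ℂ))⁻¹ • PowerSeries.coeff m (d⁄dX (R n) (Fser L ^ (j+1))) =
      ∑ p ∈ Finset.HasAntidiagonal.antidiagonal m,
        ((j.factorial : ℂ)⁻¹ • PowerSeries.coeff p.1 (Fser L ^ j)) *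
          PowerSeries.coeff p.2 (d⁄dX (R n) (Fser L)) := by
    intro j _
    have hd : d⁄dX (R n) (Fser L ^ (j+1)) = (j+1) • (Fser L ^ j * d⁄dX (R n) (Fser L)) := by
      rw [Derivation.leibniz_pow]
      rw [Nat.add_sub_cancel, smul_eq_mul]
    rw [hd, map_nsmul, ← Nat.cast_smul_eq_nsmul ℂ, smul_smul, ← fact_succ_inv']
    rw [PowerSeries.coeff_mul, Finset.smul_sum]
    apply Finset.sum_congr rfl
    intro p _
    rw [smul_mul_assoc]
  rw [Finset.sum_congr rfl step2, Finset.sum_comm]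
  rw [mul_comm ((d⁄dX (R n)) (Fser L)) (Eser L), PowerSeries.coeff_mul]
  apply Finset.sum_congr rfl
  intro p hp
  have hp1 : p.1 ≤ m := by
    have := Finset.HasAntidiagonal.mem_antidiagonal.mp hp
    omega
  rw [← Finset.sum_mul]
  have hinner : ∑ j ∈ Finset.range (m+1), (j.factorial : ℂ)⁻¹ •
      PowerSeries.coeff p.1 (Fser L ^ j) = PowerSeries.coeff p.1 (Eser L) := by
    rw [show PowerSeries.coeff p.1 (Eser L) =
      ∑ k ∈ Finset.range (p.1+1), (k.factorial : ℂ)⁻¹ •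
        PowerSeries.coeff p.1 (Fser L ^ k) from PowerSeries.coeff_mk _ _]
    symm
    apply Finset.sum_subset
    · intro x hx
      rw [Finset.mem_range] at hx ⊢
      omega
    · intro x _ hnx
      rw [Finset.mem_range] at hnx
      rw [coeff_pow_zero (constantCoeff_Fser L) (by omega), smul_zero]
  rw [hinner]


lemma toR_sum {ι : Type*} (s : Finset ι) (f : ι → Diff n) :
    toR (∑ i ∈ s, f i) = ∑ i ∈ s, toR (f i) := rfl

lemma unique (hL : IsVect L) : Gser L = Eser L := by
  apply PowerSeries.ext
  intro m
  induction m using Nat.strong_induction_on with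
  | _ m ih =>
    match m with
    | 0 =>
      rw [Gser, Eser, PowerSeries.coeff_mk, PowerSeries.coeff_mk]
      simp only [Nat.factorial_zero, Nat.cast_one, inv_one, one_smul, zero_add,
        Finset.sum_range_one, pow_zero]
      rw [PowerSeries.coeff_zero_eq_constantCoeff, map_one]
      exact unitD_eq_one
    | m + 1 =>
      have hG := congrArg (PowerSeries.coeff m) (ODE_G L hL)
      have hE := congrArg (PowerSeries.coeff m) (ODE_E L)
      rw [PowerSeries.coeff_derivative, PowerSeries.coeff_mul] at hG hE
      have hsum : ∑ p ∈ Finset.HasAntidiagonal.antidiagonal m,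
          PowerSeries.coeff p.1 (d⁄dX (R n) (Fser L)) *
            PowerSeries.coeff p.2 (Gser L) =
          ∑ p ∈ Finset.HasAntidiagonal.antidiagonal m,
          PowerSeries.coeff p.1 (d⁄dX (R n) (Fser L)) *
            PowerSeries.coeff p.2 (Eser L) := by
        apply Finset.sum_congr rfl
        intro p hp
        have : p.2 ≤ m := by
          have := Finset.HasAntidiagonal.mem_antidiagonal.mp hp
          omega
        rw [ih p.2 (by omega)]
      have heq : PowerSeries.coeff (m+1) (Gser L) * ((m : R n) + 1) =
          PowerSeries.coeff (m+1) (Eser L) * ((m : R n) + 1) := by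
        rw [hG, hE, hsum]
      rw [← Nat.cast_succ, mul_comm, mul_comm _ ((((m+1) : ℕ)) : R n), ← nsmul_eq_mul,
        ← nsmul_eq_mul, ← Nat.cast_smul_eq_nsmul ℂ, ← Nat.cast_smul_eq_nsmul ℂ] at heq
      have hm1 : ((m+1 : ℕ) : ℂ) ≠ 0 := by exact_mod_cast Nat.succ_ne_zero m
      calc PowerSeries.coeff (m+1) (Gser L)
          = ((m+1 : ℕ) : ℂ)⁻¹ • (((m+1 : ℕ) : ℂ) • PowerSeries.coeff (m+1) (Gser L)) := by
            rw [inv_smul_smul₀ hm1]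
        _ = ((m+1 : ℕ) : ℂ)⁻¹ • (((m+1 : ℕ) : ℂ) • PowerSeries.coeff (m+1) (Eser L)) := by
            rw [heq]
        _ = PowerSeries.coeff (m+1) (Eser L) := by rw [inv_smul_smul₀ hm1]

lemma bpowS_coeff (k m : ℕ) :
    toR (bpowS (fun j => if j = 0 then 0
      else ((j.factorial : ℂ)⁻¹) • white (dpow L (j - 1)) L) k m) =
    PowerSeries.coeff m (Fser L ^ k) := by
  induction k generalizing m with
  | zero =>
    show toR (if m = 0 then unitD else 0) = PowerSeries.coeff m (Fser L ^ 0)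
    rw [pow_zero]
    rcases eq_or_ne m 0 with rfl | hm
    · rw [if_pos rfl, PowerSeries.coeff_zero_eq_constantCoeff, map_one]
      exact unitD_eq_one
    · rw [if_neg hm]
      have h1 : PowerSeries.coeff m (1 : PowerSeries (R n)) = 0 := by
        rw [PowerSeries.coeff_one, if_neg hm]
      rw [h1]
  | succ k ih =>
    show toR (∑ p ∈ Finset.HasAntidiagonal.antidiagonal m, black _ _) = _
    rw [toR_sum, pow_succ', PowerSeries.coeff_mul]
    apply Finset.sum_congr rfl
    intro p _
    rw [black_eq_mul, ih p.2]
    exact congrArg (· * PowerSeries.coeff p.2 (Fser L ^ k))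
      ((PowerSeries.coeff_mk p.1 fun j => toR (Fstmt L j)).symm)

end Main
end ExpBlackAux

attribute [-instance] ExpBlackAux.instAlgebraR ExpBlackAux.instCommRingR
  ExpBlackAux.instIntCastR ExpBlackAux.instNatCastR ExpBlackAux.instPowR ExpBlackAux.instOneR
  ExpBlackAux.instMulR

/-- `Σ_{m≥0} L^m z^m/m! = exp^•(Σ_{m≥1} (L^{m-1}∘L) z^m/m!)`,
stated coefficientwise in `z` (terms with `k > m` vanish, so the exponential sum
truncates at `k = m`). -/
theorem exp_black_formula {n : ℕ} (L : Diff n) (hL : IsVect L) (m : ℕ) :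
    ((m.factorial : ℂ)⁻¹) • dpow L m =
      ∑ k ∈ Finset.range (m + 1),
        ((k.factorial : ℂ)⁻¹) •
          bpowS (fun j => if j = 0 then 0
            else ((j.factorial : ℂ)⁻¹) • white (dpow L (j - 1)) L) k m := by
  letI : CommRing (ExpBlackAux.R n) := ExpBlackAux.instCommRingR
  letI : Algebra ℂ (ExpBlackAux.R n) := ExpBlackAux.instAlgebraR
  have h := congrArg (PowerSeries.coeff m) (ExpBlackAux.unique L hL)
  rw [ExpBlackAux.Gser, ExpBlackAux.Eser, PowerSeries.coeff_mk, PowerSeries.coeff_mk] at h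
  rw [show ((m.factorial : ℂ)⁻¹) • dpow L m =
    (m.factorial : ℂ)⁻¹ • ExpBlackAux.toR (dpow L m) from rfl, h]
  apply Finset.sum_congr rfl
  intro k _
  rw [← ExpBlackAux.bpowS_coeff L k m]
end

section
/- Let f ∈ ℂ[[x]] with f(0) = 0 and f'(0) ≠ 0, and write f^{⟨−1⟩}(x) = Σ_{n≥1} bₙ xⁿ/n!. Then for every n ≥ 1, bₙ = [((1/f'(x))·d/dx)^{n−1}(1/f'(x))] evaluated at x = 0 (i.e., the constant term of that power series). -/
open PowerSeries

/-- Composition `(g ∘ f)(x) = g(f(x))` of formal power series (meaningful when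
`f(0) = 0`): the `n`-th coefficient is `Σ_{k=0}^{n} g_k · [x^n] f^k`. -/
noncomputable def pcomp (g f : PowerSeries ℂ) : PowerSeries ℂ :=
  PowerSeries.mk fun n =>
    ∑ k ∈ Finset.range (n + 1), (coeff k g) * coeff n (f ^ k)

/-- The operator `h ↦ (1/f'(x))·dh/dx` on formal power series. -/
noncomputable def lagOp (f : PowerSeries ℂ) (h : PowerSeries ℂ) : PowerSeries ℂ :=
  (derivativeFun f)⁻¹ * derivativeFun h

lemma coeff_derivativeFun' (f : PowerSeries ℂ) (n : ℕ) :
    coeff n (derivativeFun f) = coeff (n + 1) f * (n + 1) :=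
  coeff_derivative f n

lemma derivativeFun_C' (r : ℂ) : derivativeFun (C r) = 0 :=
  derivative_C

lemma trunc_derivativeFun' (f : PowerSeries ℂ) (n : ℕ) :
    trunc n (derivativeFun f) = Polynomial.derivative (trunc (n + 1) f) :=
  trunc_derivative f n

lemma coeff_pow_eq_zero' {g : PowerSeries ℂ} (hg : constantCoeff g = 0)
    {n k : ℕ} (h : n < k) : coeff n (g ^ k) = 0 := by
  have hdvd : (X : PowerSeries ℂ) ^ k ∣ g ^ k :=
    pow_dvd_pow_of_dvd (PowerSeries.X_dvd_iff.mpr hg) k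
  exact PowerSeries.X_pow_dvd_iff.mp hdvd n h

lemma aeval_trunc (g h : PowerSeries ℂ) (N : ℕ) :
    Polynomial.aeval g (trunc (N+1) h) = ∑ k ∈ Finset.range (N+1), (coeff k h) • g ^ k := by
  rw [Polynomial.aeval_eq_sum_range' (natDegree_trunc_lt h N) g]
  refine Finset.sum_congr rfl fun k hk => ?_
  rw [coeff_trunc, if_pos (Finset.mem_range.mp hk)]

lemma dvd_pcomp_sub (g h : PowerSeries ℂ) (hg : constantCoeff g = 0) (N : ℕ) :
    (X : PowerSeries ℂ) ^ (N+1) ∣ pcomp h g - Polynomial.aeval g (trunc (N+1) h) := by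
  rw [PowerSeries.X_pow_dvd_iff]
  intro m hm
  rw [map_sub, sub_eq_zero, pcomp, coeff_mk, aeval_trunc, map_sum]
  simp_rw [LinearMap.map_smul, smul_eq_mul]
  refine Finset.sum_subset (Finset.range_subset_range.mpr hm) fun k _ hk => ?_
  rw [coeff_pow_eq_zero' hg, mul_zero]
  exact lt_of_not_ge fun hle => hk (Finset.mem_range.mpr (Nat.lt_succ_of_le hle))

lemma eq_of_dvd_sub {a b : PowerSeries ℂ} (h : ∀ N, (X:PowerSeries ℂ)^(N+1) ∣ a - b) : a = b := by
  ext n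
  have := PowerSeries.X_pow_dvd_iff.mp (h n) n (Nat.lt_succ_self n)
  rwa [map_sub, sub_eq_zero] at this

lemma pcomp_one (g : PowerSeries ℂ) : pcomp 1 g = 1 := by
  ext n
  rw [pcomp, coeff_mk, Finset.sum_eq_single 0]
  · simp
  · intro k _ hk
    rw [PowerSeries.coeff_one, if_neg hk, zero_mul]
  · intro h; exact absurd (Finset.mem_range.mpr (Nat.succ_pos n)) h

lemma pcomp_mul (h₁ h₂ g : PowerSeries ℂ) (hg : constantCoeff g = 0) :
    pcomp (h₁ * h₂) g = pcomp h₁ g * pcomp h₂ g := by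
  apply eq_of_dvd_sub
  intro N
  set t₁ := trunc (N+1) h₁
  set t₂ := trunc (N+1) h₂
  set t₁₂ := trunc (N+1) (h₁ * h₂)
  have hpoly : (Polynomial.X : Polynomial ℂ)^(N+1) ∣ t₁₂ - t₁ * t₂ := by
    rw [Polynomial.X_pow_dvd_iff]
    intro d hd
    rw [Polynomial.coeff_sub, sub_eq_zero, Polynomial.coeff_mul]
    rw [coeff_trunc, if_pos hd, PowerSeries.coeff_mul]
    refine Finset.sum_congr rfl fun p hp => ?_
    have hpd := Finset.HasAntidiagonal.mem_antidiagonal.mp hp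
    have h1 : p.1 < N + 1 := lt_of_le_of_lt (hpd ▸ Nat.le_add_right p.1 p.2) hd
    have h2 : p.2 < N + 1 := lt_of_le_of_lt (hpd ▸ Nat.le_add_left p.2 p.1) hd
    rw [coeff_trunc, if_pos h1, coeff_trunc, if_pos h2]
  obtain ⟨r, hr⟩ := hpoly
  have haeval : Polynomial.aeval g t₁₂ - Polynomial.aeval g t₁ * Polynomial.aeval g t₂
      = g^(N+1) * Polynomial.aeval g r := by
    have := congrArg (Polynomial.aeval g) hr
    rw [map_sub, map_mul, map_mul, map_pow, Polynomial.aeval_X] at this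
    linear_combination this
  have hgN : (X : PowerSeries ℂ)^(N+1) ∣ g^(N+1) :=
    pow_dvd_pow_of_dvd (PowerSeries.X_dvd_iff.mpr hg) _
  have key : pcomp (h₁ * h₂) g - pcomp h₁ g * pcomp h₂ g =
      (pcomp (h₁ * h₂) g - Polynomial.aeval g t₁₂)
      + (g^(N+1) * Polynomial.aeval g r)
      + (pcomp h₁ g * (Polynomial.aeval g t₂ - pcomp h₂ g)
         + (Polynomial.aeval g t₁ - pcomp h₁ g) * Polynomial.aeval g t₂) := by
    linear_combination haeval
  rw [key]
  refine dvd_add (dvd_add (dvd_pcomp_sub g _ hg N) (hgN.mul_right _)) (dvd_add ?_ ?_)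
  · exact (dvd_sub_comm.mp (dvd_pcomp_sub g h₂ hg N)).mul_left _
  · exact (dvd_sub_comm.mp (dvd_pcomp_sub g h₁ hg N)).mul_right _

lemma derivativeFun_sub (a b : PowerSeries ℂ) :
    derivativeFun (a - b) = derivativeFun a - derivativeFun b := by
  ext n
  simp only [coeff_derivativeFun', map_sub, sub_mul]

lemma derivativeFun_pow' (a : PowerSeries ℂ) (k : ℕ) :
    derivativeFun (a ^ (k+1)) = ((k : PowerSeries ℂ) + 1) * (a ^ k * derivativeFun a) := by
  induction k with
  | zero => simp
  | succ k ih =>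
    have : a ^ (k+2) = a * a ^ (k+1) := by ring
    rw [this, derivativeFun_mul, ih, smul_eq_mul, smul_eq_mul]
    push_cast
    ring

lemma derivativeFun_aeval (g : PowerSeries ℂ) (p : Polynomial ℂ) :
    derivativeFun (Polynomial.aeval g p)
      = Polynomial.aeval g (Polynomial.derivative p) * derivativeFun g := by
  induction p using Polynomial.induction_on' with
  | add p q hp hq =>
    rw [map_add, derivativeFun_add, hp, hq, map_add, map_add, add_mul]
  | monomial k a =>
    rw [Polynomial.aeval_monomial, Polynomial.derivative_monomial, Polynomial.aeval_monomial]
    cases k with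
    | zero =>
      rw [show (algebraMap ℂ (PowerSeries ℂ)) a = C a from rfl]
      simp [derivativeFun_C']
    | succ k =>
      rw [derivativeFun_mul, derivativeFun_pow', smul_eq_mul, smul_eq_mul]
      have hC : ∀ c : ℂ, (algebraMap ℂ (PowerSeries ℂ)) c = C c := fun c => rfl
      rw [hC, hC, derivativeFun_C', mul_zero, add_zero, Nat.add_sub_cancel]
      rw [map_mul, map_natCast]
      push_cast
      ring

lemma X_pow_dvd_derivativeFun {w : PowerSeries ℂ} {N : ℕ}
    (h : (X : PowerSeries ℂ)^(N+1) ∣ w) : (X : PowerSeries ℂ)^N ∣ derivativeFun w := by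
  rw [PowerSeries.X_pow_dvd_iff] at h ⊢
  intro m hm
  rw [coeff_derivativeFun', h (m+1) (by omega), zero_mul]

lemma derivativeFun_pcomp (h g : PowerSeries ℂ) (hg : constantCoeff g = 0) :
    derivativeFun (pcomp h g) = pcomp (derivativeFun h) g * derivativeFun g := by
  apply eq_of_dvd_sub
  intro N
  have h1 : (X : PowerSeries ℂ)^(N+1) ∣
      derivativeFun (pcomp h g) - derivativeFun (Polynomial.aeval g (trunc (N+2) h)) := by
    rw [← derivativeFun_sub]
    exact X_pow_dvd_derivativeFun (dvd_pcomp_sub g h hg (N+1))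
  have h2 : derivativeFun (Polynomial.aeval g (trunc (N+2) h))
      = Polynomial.aeval g (trunc (N+1) (derivativeFun h)) * derivativeFun g := by
    rw [derivativeFun_aeval, trunc_derivativeFun']
  have h3 : (X : PowerSeries ℂ)^(N+1) ∣
      pcomp (derivativeFun h) g * derivativeFun g
        - Polynomial.aeval g (trunc (N+1) (derivativeFun h)) * derivativeFun g := by
    rw [← sub_mul]
    exact (dvd_pcomp_sub g (derivativeFun h) hg N).mul_right _
  have key : derivativeFun (pcomp h g) - pcomp (derivativeFun h) g * derivativeFun g =
      (derivativeFun (pcomp h g) - derivativeFun (Polynomial.aeval g (trunc (N+2) h)))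
      - (pcomp (derivativeFun h) g * derivativeFun g
          - Polynomial.aeval g (trunc (N+1) (derivativeFun h)) * derivativeFun g) := by
    linear_combination h2
  rw [key]
  exact dvd_sub h1 h3

lemma constantCoeff_pcomp (h g : PowerSeries ℂ) :
    constantCoeff (pcomp h g) = constantCoeff h := by
  rw [← coeff_zero_eq_constantCoeff_apply, ← coeff_zero_eq_constantCoeff_apply,
    pcomp, coeff_mk]
  simp

lemma derivativeFun_X : derivativeFun (X : PowerSeries ℂ) = 1 := by
  ext n
  rw [coeff_derivativeFun']
  cases n with
  | zero => simp
  | succ n => simp [PowerSeries.coeff_X, PowerSeries.coeff_one, Nat.succ_ne_zero]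


lemma constantCoeff_iter_deriv (m : ℕ) (h : PowerSeries ℂ) :
    constantCoeff (derivativeFun^[m] h) = (m.factorial : ℂ) * coeff m h := by
  induction m generalizing h with
  | zero => simp [coeff_zero_eq_constantCoeff]
  | succ m ih =>
    rw [Function.iterate_succ_apply, ih, coeff_derivativeFun', Nat.factorial_succ]
    push_cast
    ring

/-- if `f^{⟨-1⟩}(x) = Σ_{n≥1} bₙ xⁿ/n!` (so `bₙ = n!·[xⁿ] f^{⟨-1⟩}`),
then `bₙ = ((1/f')·d/dx)^{n-1}(1/f')` evaluated at `x = 0`. -/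
theorem lagrange_coeff (f g : PowerSeries ℂ)
    (hf0 : constantCoeff f = 0) (hf1 : coeff 1 f ≠ 0)
    (hg0 : constantCoeff g = 0) (hgf : pcomp f g = X) (hfg : pcomp g f = X)
    (n : ℕ) (hn : 1 ≤ n) :
    (n.factorial : ℂ) * coeff n g =
      constantCoeff ((lagOp f)^[n - 1] ((derivativeFun f)⁻¹)) := by
  set F := derivativeFun f with hF
  set u := F⁻¹ with hu
  have hcF : constantCoeff F ≠ 0 := by
    rw [hF, ← coeff_zero_eq_constantCoeff_apply, coeff_derivativeFun']
    simpa using hf1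
  have huF : u * F = 1 := by
    rw [hu, mul_comm]
    exact PowerSeries.mul_inv_cancel F hcF
  -- g' = pcomp u g
  have hchain : pcomp F g * derivativeFun g = 1 := by
    have := congrArg derivativeFun hgf
    rwa [derivativeFun_pcomp f g hg0, derivativeFun_X] at this
  have hG : derivativeFun g = pcomp u g := by
    calc derivativeFun g = (pcomp u g * pcomp F g) * derivativeFun g := by
          rw [← pcomp_mul u F g hg0, huF, pcomp_one, one_mul]
      _ = pcomp u g * (pcomp F g * derivativeFun g) := by ring
      _ = pcomp u g := by rw [hchain, mul_one]
  -- main induction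
  have main : ∀ m : ℕ, derivativeFun^[m+1] g = pcomp ((lagOp f)^[m] u) g := by
    intro m
    induction m with
    | zero => simpa using hG
    | succ m ih =>
      rw [Function.iterate_succ_apply', ih, derivativeFun_pcomp _ g hg0, hG,
        ← pcomp_mul _ _ g hg0, Function.iterate_succ_apply']
      congr 1
      rw [lagOp, mul_comm]
  obtain ⟨m, rfl⟩ : ∃ m, n = m + 1 := ⟨n - 1, (Nat.succ_pred_eq_of_pos hn).symm⟩
  have := constantCoeff_iter_deriv (m+1) g
  rw [main m, constantCoeff_pcomp] at this
  rw [← this, Nat.add_sub_cancel]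
end
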